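/- Let A ∈ ℝ^{m×n} have rows a_1,…,a_m and let λ > 0. Define the reverse online λ-ridge leverage score of the i-th row as ℓ_i = a_i (Σ_{j=i}^{m} a_jᵀa_j + λ·I_n)^{-1} a_iᵀ, i.e. the λ-ridge leverage score of a_i with respect to the suffix matrix consisting of rows a_m, a_{m−1}, …, a_i (note each ℓ_i ≤ 1 automatically). Then Σ_{i=1}^m ℓ_i ≤ n·ln(1 + ‖A‖₂²/λ), where ‖A‖₂ is the spectral norm of A. -/

import Mathlib

open Matrix

/-- The reverse online `λ`-ridge leverage score of the `i`-th row of `A`: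
the `λ`-ridge leverage score of `aᵢ` with respect to the suffix matrix of rows
`a_m, a_{m-1}, …, a_i`, namely `aᵢ (∑_{j≥i} aⱼᵀaⱼ + λI)⁻¹ aᵢᵀ`. -/
noncomputable def reverseOnlineRidgeScore {m n : ℕ} (A : Matrix (Fin m) (Fin n) ℝ)
    (lam : ℝ) (i : Fin m) : ℝ :=
  (A i) ⬝ᵥ
    (((∑ j : Fin m, if (i : ℕ) ≤ (j : ℕ) then vecMulVec (A j) (A j) else 0)
        + lam • 1)⁻¹ *ᵥ (A i))

/-- The squared spectral norm `‖A‖₂²` of `A`, i.e. the largest eigenvalue of `AᵀA`. -/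
noncomputable def spectralNormSq {m n : ℕ} (A : Matrix (Fin m) (Fin n) ℝ) : ℝ :=
  ⨆ i, (Matrix.isHermitian_conjTranspose_mul_self A).eigenvalues i

/-- The suffix Gram matrix `∑_{j≥i} aⱼᵀaⱼ + λI`. -/
noncomputable def Msuf {m n : ℕ} (A : Matrix (Fin m) (Fin n) ℝ) (lam : ℝ) (i : ℕ) :
    Matrix (Fin n) (Fin n) ℝ :=
  (∑ j : Fin m, if i ≤ (j : ℕ) then vecMulVec (A j) (A j) else 0) + lam • 1

lemma Msuf_posDef {m n : ℕ} (A : Matrix (Fin m) (Fin n) ℝ) {lam : ℝ} (hlam : 0 < lam) (i : ℕ) :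
    (Msuf A lam i).PosDef := by
  refine Matrix.PosDef.posSemidef_add ?_ ?_
  · apply Finset.sum_induction _ (fun M : Matrix (Fin n) (Fin n) ℝ => M.PosSemidef)
      (fun a b ha hb => ha.add hb) Matrix.PosSemidef.zero
    intro j _
    split_ifs
    · have h := Matrix.posSemidef_conjTranspose_mul_self (Matrix.replicateRow (Fin 1) (A j))
      rw [Matrix.vecMulVec_eq (Fin 1)]; rwa [Matrix.conjTranspose_replicateRow, star_trivial] at h
    · exact Matrix.PosSemidef.zero
  · rw [smul_one_eq_diagonal]
    exact Matrix.posDef_diagonal_iff.mpr fun _ => hlam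

lemma Msuf_step {m n : ℕ} (A : Matrix (Fin m) (Fin n) ℝ) (lam : ℝ) (i : ℕ) (hi : i < m) :
    Msuf A lam i = Msuf A lam (i + 1) + vecMulVec (A ⟨i, hi⟩) (A ⟨i, hi⟩) := by
  unfold Msuf
  have key : ∀ j : Fin m, (if i ≤ (j : ℕ) then vecMulVec (A j) (A j) else 0)
      = (if (⟨i, hi⟩ : Fin m) = j then vecMulVec (A j) (A j) else 0)
        + (if i + 1 ≤ (j : ℕ) then vecMulVec (A j) (A j) else 0) := by
    intro j
    have : ((⟨i, hi⟩ : Fin m) = j) ↔ i = (j : ℕ) := by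
      constructor
      · rintro rfl; rfl
      · intro h; exact Fin.ext h
    split_ifs with h1 h2 h3 h2 h3 <;> simp_all <;> omega
  rw [Finset.sum_congr rfl (fun j _ => key j), Finset.sum_add_distrib,
    Finset.sum_ite_eq Finset.univ (⟨i, hi⟩ : Fin m)]
  simp only [Finset.mem_univ, if_true]
  abel

lemma Msuf_last {m n : ℕ} (A : Matrix (Fin m) (Fin n) ℝ) (lam : ℝ) :
    Msuf A lam m = lam • 1 := by
  unfold Msuf
  rw [Finset.sum_eq_zero, zero_add]
  intro j _
  rw [if_neg (by omega)]

lemma Msuf_zero {m n : ℕ} (A : Matrix (Fin m) (Fin n) ℝ) (lam : ℝ) :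
    Msuf A lam 0 = Aᵀ * A + lam • 1 := by
  unfold Msuf
  congr 1
  ext i k
  simp [Matrix.mul_apply, Matrix.vecMulVec_apply, Matrix.sum_apply, mul_comm]

lemma det_sub_vecMulVec {n : ℕ} (B : Matrix (Fin n) (Fin n) ℝ) (hB : IsUnit B.det)
    (a : Fin n → ℝ) :
    (B - vecMulVec a a).det = B.det * (1 - a ⬝ᵥ (B⁻¹ *ᵥ a)) := by
  have h := Matrix.det_add_replicateCol_mul_replicateRow (ι := Fin 1) hB (-a) a
  have e1 : B + replicateCol (Fin 1) (-a) * replicateRow (Fin 1) a = B - vecMulVec a a := by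
    ext i j
    simp [Matrix.mul_apply, Matrix.vecMulVec_apply, Matrix.replicateCol, Matrix.replicateRow]
    ring
  rw [← e1]; refine h.trans ?_; rw [Matrix.mul_assoc, ← Matrix.replicateCol_mulVec]
  simp only [Matrix.det_unique, Matrix.add_apply, Matrix.one_apply_eq,
    Matrix.replicateRow_mul_replicateCol_apply, Matrix.mulVec_neg, dotProduct_neg]
  ring

lemma det_Msuf_zero_le {m n : ℕ} (A : Matrix (Fin m) (Fin n) ℝ) {lam : ℝ} (hlam : 0 < lam) :
    (Msuf A lam 0).det ≤ (spectralNormSq A + lam) ^ n := by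
  rw [Msuf_zero]
  set hH := Matrix.isHermitian_conjTranspose_mul_self A with hHdef
  set U : Matrix (Fin n) (Fin n) ℝ := (hH.eigenvectorUnitary : Matrix (Fin n) (Fin n) ℝ)
  have hUU : U * star U = 1 := Matrix.mem_unitaryGroup_iff.mp hH.eigenvectorUnitary.2
  have hdiag : Aᵀ * A = U * diagonal hH.eigenvalues * star U := by
    have := hH.spectral_theorem
    refine Eq.trans ?_ (this.trans ?_)
    · rw [Matrix.conjTranspose_eq_transpose_of_trivial]
    · simp [U]
  have hsmul : lam • (1 : Matrix (Fin n) (Fin n) ℝ) = U * (lam • 1) * star U := by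
    rw [Matrix.mul_smul, Matrix.smul_mul, Matrix.mul_one, hUU]
  have hsum : Aᵀ * A + lam • 1 = U * (diagonal hH.eigenvalues + lam • 1) * star U := by
    rw [Matrix.mul_add, Matrix.add_mul, ← hdiag, ← hsmul]
  have hdet : (Aᵀ * A + lam • 1).det = (diagonal hH.eigenvalues + lam • 1).det := by
    rw [hsum, Matrix.det_mul_right_comm, hUU, Matrix.one_mul]
  rw [hdet, smul_one_eq_diagonal, Matrix.diagonal_add, Matrix.det_diagonal]
  have hPSD : (Aᵀ * A).PosSemidef := by
    have h := Matrix.posSemidef_conjTranspose_mul_self A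
    rwa [Matrix.conjTranspose_eq_transpose_of_trivial] at h
  calc ∏ k, (hH.eigenvalues k + lam)
      ≤ ∏ _k : Fin n, (spectralNormSq A + lam) := by
        apply Finset.prod_le_prod
        · intro k _
          have := hPSD.eigenvalues_nonneg k
          positivity
        · intro k _
          have hk : hH.eigenvalues k ≤ spectralNormSq A :=
            le_ciSup (Set.Finite.bddAbove (Set.finite_range _)) k
          linarith
    _ = (spectralNormSq A + lam) ^ n := by
        rw [Finset.prod_const, Finset.card_univ, Fintype.card_fin]

lemma spectralNormSq_nonneg {m n : ℕ} (A : Matrix (Fin m) (Fin n) ℝ) :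
    0 ≤ spectralNormSq A := by
  apply Real.iSup_nonneg
  intro k
  have hPSD : (Aᵀ * A).PosSemidef := by
    have h := Matrix.posSemidef_conjTranspose_mul_self A
    rwa [Matrix.conjTranspose_eq_transpose_of_trivial] at h
  exact hPSD.eigenvalues_nonneg k

/-- **Sum of reverse online ridge leverage scores is bounded:**
`∑ ℓᵢ ≤ n·ln(1 + ‖A‖₂²/λ)`. -/
theorem sum_reverseOnlineRidgeScore_le (m n : ℕ) (lam : ℝ) (hlam : 0 < lam)
    (A : Matrix (Fin m) (Fin n) ℝ) :
    ∑ i : Fin m, reverseOnlineRidgeScore A lam i ≤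
      n * Real.log (1 + spectralNormSq A / lam) := by
  set s := spectralNormSq A with hs
  have hs0 : 0 ≤ s := spectralNormSq_nonneg A
  have hpd : ∀ i : ℕ, (Msuf A lam i).PosDef := Msuf_posDef A hlam
  have hdetpos : ∀ i : ℕ, 0 < (Msuf A lam i).det := fun i => (hpd i).det_pos
  set f : ℕ → ℝ := fun i => Real.log (Msuf A lam i).det with hf
  have key : ∀ i : Fin m, reverseOnlineRidgeScore A lam i ≤ f i - f ((i : ℕ) + 1) := by
    intro i
    have hsub : Msuf A lam ((i : ℕ) + 1) = Msuf A lam i - vecMulVec (A i) (A i) := by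
      have h1 := Msuf_step A lam i i.isLt
      rw [h1]; abel
    have hdet : (Msuf A lam ((i : ℕ) + 1)).det
        = (Msuf A lam i).det * (1 - reverseOnlineRidgeScore A lam i) := by
      rw [hsub]
      exact det_sub_vecMulVec _ (isUnit_iff_ne_zero.mpr (hdetpos i).ne') (A i)
    set r : ℝ := (Msuf A lam ((i : ℕ) + 1)).det / (Msuf A lam i).det with hr
    have hrpos : 0 < r := div_pos (hdetpos _) (hdetpos _)
    have hscore : reverseOnlineRidgeScore A lam i = 1 - r := by
      rw [hr, hdet, mul_div_cancel_left₀ _ (hdetpos (i : ℕ)).ne']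
      ring
    have hlog : Real.log r ≤ r - 1 := Real.log_le_sub_one_of_pos hrpos
    have hlogr : Real.log r = f ((i : ℕ) + 1) - f (i : ℕ) := by
      rw [hr, Real.log_div (hdetpos _).ne' (hdetpos _).ne']
    rw [hscore]
    linarith
  calc ∑ i : Fin m, reverseOnlineRidgeScore A lam i
      ≤ ∑ i : Fin m, (f i - f ((i : ℕ) + 1)) := Finset.sum_le_sum fun i _ => key i
    _ = ∑ i ∈ Finset.range m, (f i - f (i + 1)) :=
        Fin.sum_univ_eq_sum_range (fun i => f i - f (i + 1)) m
    _ = f 0 - f m := Finset.sum_range_sub' f m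
    _ ≤ n * Real.log (s + lam) - n * Real.log lam := by
        have h1 : f 0 ≤ n * Real.log (s + lam) := by
          have hle := det_Msuf_zero_le A hlam
          have := Real.log_le_log (hdetpos 0) hle
          rwa [Real.log_pow] at this
        have h2 : f m = n * Real.log lam := by
          rw [hf]
          simp only [Msuf_last A lam]
          rw [Matrix.det_smul, Matrix.det_one, mul_one, Fintype.card_fin, Real.log_pow]
        linarith
    _ = n * Real.log (1 + s / lam) := by
        rw [← mul_sub, ← Real.log_div (by positivity) hlam.ne']
        congr 2
        field_simp
        ring
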